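/- Let w₁, w₂ be nonzero reals with |w₁| > |w₂|, and let μ be a Borel probability measure on ℝ with ∫ x² dμ(x) < ∞. Let μ_abs denote the pushforward of μ under the absolute value map x ↦ |x|. Then R_s(μ_abs) ≤ R_s(μ). (Lemma 2, second inequality.) -/

import Mathlib

open MeasureTheory Real Filter

/-- The standard Gaussian tail function `Q(x) = ∫_x^∞ (2π)^{-1/2} e^{-u²/2} du`. -/
noncomputable def gaussQ (x : ℝ) : ℝ :=
  ∫ u in Set.Ioi x, (Real.sqrt (2 * Real.pi))⁻¹ * Real.exp (-u ^ 2 / 2)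

/-- `η(t) = -t log t` (with `η(0) = 0`, automatic since `Real.log 0 = 0`). -/
noncomputable def eta (t : ℝ) : ℝ := -t * Real.log t

/-- The binary entropy function `h(p) = -p log p - (1-p) log (1-p)`. -/
noncomputable def binEnt (p : ℝ) : ℝ := eta p + eta (1 - p)

/-- `I(μ, w) = h(∫ Q(w·x) dμ) - ∫ h(Q(w·x)) dμ`, the mutual information of the real
Gaussian channel `Y = sgn(w·X + N)`, `N ~ N(0,1)`, with a one-bit ADC and input `X ~ μ`. -/
noncomputable def miMeas (μ : Measure ℝ) (w : ℝ) : ℝ :=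
  binEnt (∫ x, gaussQ (w * x) ∂μ) - ∫ x, binEnt (gaussQ (w * x)) ∂μ

/-- The Wyner secrecy rate `R_s(μ) = I(μ, w₁) - I(μ, w₂)`. -/
noncomputable def wynerRs (w₁ w₂ : ℝ) (μ : Measure ℝ) : ℝ := miMeas μ w₁ - miMeas μ w₂

/-- The standard Gaussian density. -/
noncomputable def gpdf (u : ℝ) : ℝ := (Real.sqrt (2 * Real.pi))⁻¹ * Real.exp (-u ^ 2 / 2)




lemma gaussQ_eq_int (x : ℝ) : gaussQ x = ∫ u in Set.Ioi x, gpdf u := rfl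

lemma gpdf_pos (u : ℝ) : 0 < gpdf u := by
  have h : (0:ℝ) < Real.sqrt (2 * Real.pi) := Real.sqrt_pos.2 (by positivity)
  exact mul_pos (inv_pos.2 h) (Real.exp_pos _)

lemma gpdf_le (u : ℝ) : gpdf u ≤ (Real.sqrt (2 * Real.pi))⁻¹ := by
  have h : Real.exp (-u ^ 2 / 2) ≤ 1 := by
    rw [Real.exp_le_one_iff]; nlinarith [sq_nonneg u]
  have h2 : (0:ℝ) ≤ (Real.sqrt (2 * Real.pi))⁻¹ := by positivity
  calc gpdf u ≤ (Real.sqrt (2 * Real.pi))⁻¹ * 1 := mul_le_mul_of_nonneg_left h h2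
  _ = _ := mul_one _

lemma continuous_gpdf : Continuous gpdf := by
  unfold gpdf; fun_prop

lemma gpdf_neg (u : ℝ) : gpdf (-u) = gpdf u := by simp [gpdf]

lemma integrable_gpdf : Integrable gpdf := by
  have h : Integrable (fun u : ℝ => Real.exp (-(1/2) * u ^ 2)) := integrable_exp_neg_mul_sq (by norm_num)
  have := h.const_mul (Real.sqrt (2 * Real.pi))⁻¹
  refine this.congr (Eventually.of_forall fun u => ?_)
  simp only [gpdf]; ring_nf

lemma integral_gpdf : ∫ u, gpdf u = 1 := by
  have h : ∫ u : ℝ, Real.exp (-(1/2) * u ^ 2) = Real.sqrt (Real.pi / (1/2)) := integral_gaussian _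
  have h2 : ∫ u, gpdf u = (Real.sqrt (2 * Real.pi))⁻¹ * ∫ u : ℝ, Real.exp (-(1/2) * u ^ 2) := by
    rw [← integral_const_mul]
    congr 1; ext u; simp only [gpdf]; ring_nf
  rw [h2, h]
  have : Real.pi / (1/2) = 2 * Real.pi := by ring
  rw [this, inv_mul_cancel₀]
  exact ne_of_gt (Real.sqrt_pos.2 (by positivity))

lemma gaussQ_eq (x : ℝ) : gaussQ x = 1 - ∫ u in Set.Iic x, gpdf u := by
  rw [gaussQ_eq_int, eq_sub_iff_add_eq, add_comm,
    intervalIntegral.integral_Iic_add_Ioi integrable_gpdf.integrableOn integrable_gpdf.integrableOn,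
    integral_gpdf]

lemma gaussQ_neg (x : ℝ) : gaussQ (-x) = 1 - gaussQ x := by
  have h : gaussQ (-x) = ∫ u in Set.Iic x, gpdf u := by
    rw [gaussQ_eq_int]
    have : ∀ u, gpdf u = gpdf (-u) := fun u => (gpdf_neg u).symm
    calc ∫ u in Set.Ioi (-x), gpdf u = ∫ u in Set.Ioi (-x), gpdf (-u) := by
          exact setIntegral_congr_fun measurableSet_Ioi fun u _ => this u
    _ = ∫ u in Set.Iic (-(-x)), gpdf u := integral_comp_neg_Ioi _ _
    _ = _ := by rw [neg_neg]
  rw [h, gaussQ_eq x]; ring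

lemma gaussQ_sub (a b : ℝ) : gaussQ a - gaussQ b = ∫ u in a..b, gpdf u := by
  rw [gaussQ_eq, gaussQ_eq, ← intervalIntegral.integral_Iic_sub_Iic
    integrable_gpdf.integrableOn integrable_gpdf.integrableOn]
  ring

lemma hasDerivAt_gaussQ (x : ℝ) : HasDerivAt gaussQ (-gpdf x) x := by
  have h : ∀ y, gaussQ y = gaussQ 0 - ∫ u in (0:ℝ)..y, gpdf u := by
    intro y; rw [← gaussQ_sub]; ring
  have hd : HasDerivAt (fun y => ∫ u in (0:ℝ)..y, gpdf u) (gpdf x) x :=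
    intervalIntegral.integral_hasDerivAt_right integrable_gpdf.intervalIntegrable
      continuous_gpdf.aestronglyMeasurable.stronglyMeasurableAtFilter continuous_gpdf.continuousAt
  have := (hasDerivAt_const x (gaussQ 0)).sub hd
  simp only [zero_sub] at this
  exact (funext h : gaussQ = _) ▸ this

lemma continuous_gaussQ : Continuous gaussQ :=
  continuous_iff_continuousAt.2 fun x => (hasDerivAt_gaussQ x).continuousAt

lemma gaussQ_antitone : Antitone gaussQ := by
  intro a b hab
  have : gaussQ a - gaussQ b = ∫ u in a..b, gpdf u := gaussQ_sub a b
  have hnn : 0 ≤ ∫ u in a..b, gpdf u :=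
    intervalIntegral.integral_nonneg hab fun u _ => (gpdf_pos u).le
  linarith

lemma gaussQ_pos (x : ℝ) : 0 < gaussQ x := by
  have h1 : gaussQ x - gaussQ (x+1) = ∫ u in x..(x+1), gpdf u := gaussQ_sub _ _
  have h2 : 0 < ∫ u in x..(x+1), gpdf u :=
    intervalIntegral.intervalIntegral_pos_of_pos (integrable_gpdf.intervalIntegrable)
      (fun u => gpdf_pos u) (by linarith)
  have h3 : 0 ≤ gaussQ (x+1) := by
    rw [gaussQ_eq_int]
    exact setIntegral_nonneg measurableSet_Ioi fun u _ => (gpdf_pos u).le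
  linarith

lemma gaussQ_lt_one (x : ℝ) : gaussQ x < 1 := by
  have := gaussQ_pos (-x)
  rw [gaussQ_neg] at this; linarith

lemma gaussQ_zero : gaussQ 0 = 1/2 := by
  have := gaussQ_neg 0
  rw [neg_zero] at this; linarith

lemma binEnt_one_sub (p : ℝ) : binEnt (1 - p) = binEnt p := by
  simp [binEnt, sub_sub_cancel, add_comm]

lemma continuous_eta : Continuous eta := by
  have := Real.continuous_mul_log
  have h : eta = fun t => -(t * Real.log t) := by ext t; simp [eta, neg_mul]
  rw [h]; exact this.neg

lemma continuous_binEnt : Continuous binEnt :=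
  (continuous_eta).add (continuous_eta.comp (continuous_const.sub continuous_id))

lemma eta_nonneg {t : ℝ} (h0 : 0 ≤ t) (h1 : t ≤ 1) : 0 ≤ eta t := by
  rcases eq_or_lt_of_le h0 with h|h
  · simp [eta, ← h]
  · have : Real.log t ≤ 0 := Real.log_nonpos h0 h1
    simp only [eta, neg_mul]
    nlinarith

lemma eta_le_one {t : ℝ} (h0 : 0 ≤ t) (h1 : t ≤ 1) : eta t ≤ 1 := by
  rcases eq_or_lt_of_le h0 with h|h
  · simp [eta, ← h]
  · have := Real.log_le_sub_one_of_pos (inv_pos.2 h)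
    rw [Real.log_inv] at this
    have h2 : -Real.log t ≤ t⁻¹ - 1 := this
    have h3 : -t * Real.log t ≤ t * (t⁻¹ - 1) := by
      have := mul_le_mul_of_nonneg_left h2 h0
      nlinarith
    have h4 : t * (t⁻¹ - 1) = 1 - t := by field_simp
    simp only [eta]; nlinarith [h4 ▸ h3]

lemma binEnt_nonneg {t : ℝ} (h0 : 0 ≤ t) (h1 : t ≤ 1) : 0 ≤ binEnt t :=
  add_nonneg (eta_nonneg h0 h1) (eta_nonneg (by linarith) (by linarith))

lemma binEnt_le_two {t : ℝ} (h0 : 0 ≤ t) (h1 : t ≤ 1) : binEnt t ≤ 2 := by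
  have := eta_le_one h0 h1
  have := eta_le_one (t := 1 - t) (by linarith) (by linarith)
  simp only [binEnt]; linarith

lemma hasDerivAt_eta {t : ℝ} (ht : t ≠ 0) : HasDerivAt eta (-(Real.log t + 1)) t := by
  have := (Real.hasDerivAt_mul_log ht).neg
  have h : eta = fun t => -(t * Real.log t) := by ext t; simp [eta, neg_mul]
  rw [h]; exact this

lemma hasDerivAt_binEnt {p : ℝ} (h0 : 0 < p) (h1 : p < 1) :
    HasDerivAt binEnt (Real.log (1 - p) - Real.log p) p := by
  have h2 : (1:ℝ) - p ≠ 0 := by linarith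
  have ha : HasDerivAt eta (-(Real.log p + 1)) p := hasDerivAt_eta (ne_of_gt h0)
  have hb : HasDerivAt (fun q => eta (1 - q)) (-(Real.log (1-p) + 1) * (-1)) p := by
    have hlin : HasDerivAt (fun q : ℝ => 1 - q) (-1) p := by
      exact (hasDerivAt_id' p).const_sub 1
    exact (hasDerivAt_eta h2).comp p hlin
  have := ha.add hb
  exact this.congr_deriv (by ring)

lemma integrable_gaussQ_comp (μ : Measure ℝ) [IsProbabilityMeasure μ] (g : ℝ → ℝ) (hg : Measurable g) (w : ℝ) :
    Integrable (fun x => gaussQ (w * g x)) μ := by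
  refine Integrable.mono' (integrable_const 1)
    ((continuous_gaussQ.measurable.comp (measurable_const.mul hg)).aestronglyMeasurable) ?_
  refine Eventually.of_forall fun x => ?_
  rw [Real.norm_eq_abs, abs_of_pos (gaussQ_pos _)]
  exact (gaussQ_lt_one _).le

lemma integral_gaussQ_pos (μ : Measure ℝ) [IsProbabilityMeasure μ] (g : ℝ → ℝ) (hg : Measurable g) (w : ℝ) :
    0 < ∫ x, gaussQ (w * g x) ∂μ := by
  rw [integral_pos_iff_support_of_nonneg_ae
    (Eventually.of_forall fun x => (gaussQ_pos _).le) (integrable_gaussQ_comp μ g hg w)]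
  have : Function.support (fun x => gaussQ (w * g x)) = Set.univ := by
    ext x; simp [Function.support, ne_of_gt (gaussQ_pos (w * g x))]
  rw [this]; simp

lemma integral_gaussQ_lt_one (μ : Measure ℝ) [IsProbabilityMeasure μ] (g : ℝ → ℝ) (hg : Measurable g) (w : ℝ) :
    ∫ x, gaussQ (w * g x) ∂μ < 1 := by
  have hInt : Integrable (fun x => 1 - gaussQ (w * g x)) μ := by
    exact (integrable_const 1).sub (integrable_gaussQ_comp μ g hg w)
  have h : 0 < ∫ x, (1 - gaussQ (w * g x)) ∂μ := by
    rw [integral_pos_iff_support_of_nonneg_ae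
      (Eventually.of_forall fun x => by simp only [Pi.zero_apply]; linarith [gaussQ_lt_one (w * g x)])
      hInt]
    have : Function.support (fun x => 1 - gaussQ (w * g x)) = Set.univ := by
      ext x; simp only [Function.support, Set.mem_setOf_eq, Set.mem_univ, iff_true]
      have := gaussQ_lt_one (w * g x); intro hc; linarith [sub_eq_zero.1 hc]
    rw [this]; simp
  rw [integral_sub (integrable_const 1) (integrable_gaussQ_comp μ g hg w)] at h
  simp at h; linarith

lemma hasDerivAt_integral_gaussQ (μ : Measure ℝ) [IsProbabilityMeasure μ] (habs : Integrable (fun x : ℝ => |x|) μ)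
    (g : ℝ → ℝ) (hg : Measurable g) (hgabs : ∀ x, |g x| ≤ |x|) (w : ℝ) :
    Integrable (fun x => -gpdf (w * g x) * g x) μ ∧
    HasDerivAt (fun w => ∫ x, gaussQ (w * g x) ∂μ)
      (∫ x, -gpdf (w * g x) * g x ∂μ) w := by
  have key := hasDerivAt_integral_of_dominated_loc_of_deriv_le (μ := μ)
    (F := fun w x => gaussQ (w * g x)) (F' := fun w x => -gpdf (w * g x) * g x)
    (x₀ := w) (s := Metric.ball w 1) (bound := fun x => (Real.sqrt (2 * Real.pi))⁻¹ * |x|)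
    (Metric.ball_mem_nhds w one_pos)
    (Eventually.of_forall fun w' =>
      ((continuous_gaussQ.measurable.comp (measurable_const.mul hg)).aestronglyMeasurable))
    (integrable_gaussQ_comp μ g hg w)
    (((continuous_gpdf.measurable.comp (measurable_const.mul hg)).neg.mul hg).aestronglyMeasurable)
    (Eventually.of_forall fun x w' _ => ?_)
    (habs.const_mul _)
    (Eventually.of_forall fun x w' _ => ?_)
  · exact key
  · rw [Real.norm_eq_abs, abs_mul, abs_neg, abs_of_pos (gpdf_pos _)]
    exact mul_le_mul (gpdf_le _) (hgabs x) (abs_nonneg _) (by positivity)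
  · have h1 : HasDerivAt (fun w : ℝ => w * g x) (g x) w' := hasDerivAt_mul_const (g x)
    exact (hasDerivAt_gaussQ (w' * g x)).comp w' h1



lemma gpdf_mul_abs (w x : ℝ) : gpdf (w * |x|) = gpdf (w * x) := by
  rcases abs_choice x with h | h
  · rw [h]
  · rw [h, mul_neg, gpdf_neg]

/-- The folding penalty function. -/
noncomputable def Ffun (μ : Measure ℝ) (w : ℝ) : ℝ :=
  binEnt (∫ x, gaussQ (w * |x|) ∂μ) - binEnt (∫ x, gaussQ (w * x) ∂μ)

lemma Ffun_hasDerivAt (μ : Measure ℝ) [IsProbabilityMeasure μ] (habs : Integrable (fun x : ℝ => |x|) μ) (w : ℝ) :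
    HasDerivAt (Ffun μ)
      ((Real.log (1 - ∫ x, gaussQ (w * |x|) ∂μ) - Real.log (∫ x, gaussQ (w * |x|) ∂μ)) *
          (∫ x, -gpdf (w * |x|) * |x| ∂μ) -
        (Real.log (1 - ∫ x, gaussQ (w * x) ∂μ) - Real.log (∫ x, gaussQ (w * x) ∂μ)) *
          (∫ x, -gpdf (w * x) * x ∂μ)) w := by
  have hq := (hasDerivAt_integral_gaussQ μ habs (fun x => |x|) measurable_abs
    (fun x => by rw [abs_abs]) w).2
  have hp := (hasDerivAt_integral_gaussQ μ habs (fun x => x) measurable_id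
    (fun x => le_rfl) w).2
  have h1 := (hasDerivAt_binEnt (integral_gaussQ_pos μ (fun x => |x|) measurable_abs w)
    (integral_gaussQ_lt_one μ (fun x => |x|) measurable_abs w)).comp w hq
  have h2 := (hasDerivAt_binEnt (integral_gaussQ_pos μ (fun x => x) measurable_id w)
    (integral_gaussQ_lt_one μ (fun x => x) measurable_id w)).comp w hp
  exact h1.sub h2

lemma Ffun_deriv_nonpos (μ : Measure ℝ) [IsProbabilityMeasure μ] (habs : Integrable (fun x : ℝ => |x|) μ) {w : ℝ} (hw : 0 ≤ w) :
    ((Real.log (1 - ∫ x, gaussQ (w * |x|) ∂μ) - Real.log (∫ x, gaussQ (w * |x|) ∂μ)) *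
        (∫ x, -gpdf (w * |x|) * |x| ∂μ) -
      (Real.log (1 - ∫ x, gaussQ (w * x) ∂μ) - Real.log (∫ x, gaussQ (w * x) ∂μ)) *
        (∫ x, -gpdf (w * x) * x ∂μ)) ≤ 0 := by
  set Q := ∫ x, gaussQ (w * |x|) ∂μ with hQdef
  set P := ∫ x, gaussQ (w * x) ∂μ with hPdef
  set u := ∫ x, -gpdf (w * |x|) * |x| ∂μ with hudef
  set v := ∫ x, -gpdf (w * x) * x ∂μ with hvdef
  have hq0 : 0 < Q := integral_gaussQ_pos μ (fun x => |x|) measurable_abs w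
  have hq1 : Q < 1 := integral_gaussQ_lt_one μ (fun x => |x|) measurable_abs w
  have hp0 : 0 < P := integral_gaussQ_pos μ (fun x => x) measurable_id w
  have hp1 : P < 1 := integral_gaussQ_lt_one μ (fun x => x) measurable_id w
  -- pointwise inequalities
  have hQP : Q ≤ P := by
    refine integral_mono (integrable_gaussQ_comp μ (fun x => |x|) measurable_abs w)
      (integrable_gaussQ_comp μ (fun x => x) measurable_id w) fun x => ?_
    exact gaussQ_antitone (mul_le_mul_of_nonneg_left (le_abs_self x) hw)
  have hQ1P : Q ≤ 1 - P := by
    have : Q + P ≤ 1 := by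
      have hmono : ∀ x, gaussQ (w * |x|) + gaussQ (w * x) ≤ 1 := by
        intro x
        have h1 : gaussQ (w * |x|) ≤ gaussQ (-(w * x)) := by
          apply gaussQ_antitone
          rw [← mul_neg]
          exact mul_le_mul_of_nonneg_left (neg_le_abs x) hw
        rw [gaussQ_neg] at h1; linarith
      calc Q + P = ∫ x, (gaussQ (w * |x|) + gaussQ (w * x)) ∂μ := by
            rw [integral_add (integrable_gaussQ_comp μ (fun x => |x|) measurable_abs w)
              (integrable_gaussQ_comp μ (fun x => x) measurable_id w)]
      _ ≤ ∫ _x, (1:ℝ) ∂μ := by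
            refine integral_mono ((integrable_gaussQ_comp μ (fun x => |x|) measurable_abs w).add
              (integrable_gaussQ_comp μ (fun x => x) measurable_id w)) (integrable_const 1) hmono
      _ = 1 := by simp
    linarith
  set a := Real.log (1 - Q) - Real.log Q with hadef
  set b := Real.log (1 - P) - Real.log P with hbdef
  have ha : 0 ≤ a := by
    have h2 : Q ≤ 1 - Q := by linarith
    have := Real.log_le_log hq0 h2
    linarith
  have hba : |b| ≤ a := by
    rw [abs_le]
    constructor
    · have h1 : Real.log Q ≤ Real.log (1 - P) := Real.log_le_log hq0 hQ1P
      have h2 : Real.log P ≤ Real.log (1 - Q) := Real.log_le_log hp0 (by linarith)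
      simp only [hadef, hbdef]; linarith
    · have h1 : Real.log Q ≤ Real.log P := Real.log_le_log hq0 hQP
      have h2 : Real.log (1 - P) ≤ Real.log (1 - Q) := Real.log_le_log (by linarith) (by linarith)
      simp only [hadef, hbdef]; linarith
  have hu : u ≤ 0 := by
    rw [hudef]
    refine integral_nonpos fun x => ?_
    have h := gpdf_pos (w * |x|)
    have h2 := abs_nonneg x
    simp only [neg_mul, Pi.zero_apply]
    nlinarith
  have hvu : |v| ≤ -u := by
    have h1 : |v| ≤ ∫ x, |gpdf (w * x)| * |x| ∂μ := by
      rw [hvdef]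
      simpa [Real.norm_eq_abs, abs_mul, neg_mul] using
        norm_integral_le_integral_norm (μ := μ) (f := fun x => -gpdf (w * x) * x)
    have h2 : ∀ x, |gpdf (w * x)| * |x| = -(-gpdf (w * |x|) * |x|) := by
      intro x
      rw [abs_of_pos (gpdf_pos _), ← gpdf_mul_abs]
      ring
    have h3 : ∫ x, |gpdf (w * x)| * |x| ∂μ = -u := by
      rw [hudef, ← integral_neg]
      exact integral_congr_ae (Eventually.of_forall fun x => h2 x)
    linarith [h3 ▸ h1]
  have key : |b * v| ≤ a * (-u) := by
    rw [abs_mul]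
    exact mul_le_mul hba hvu (abs_nonneg _) ha
  have h5 := neg_abs_le (b * v)
  have h6 : a * (-u) = -(a * u) := by ring
  linarith

lemma Ffun_antitoneOn (μ : Measure ℝ) [IsProbabilityMeasure μ] (habs : Integrable (fun x : ℝ => |x|) μ) :
    AntitoneOn (Ffun μ) (Set.Ici 0) := by
  refine antitoneOn_of_deriv_nonpos (convex_Ici 0) ?_ ?_ ?_
  · exact Continuous.continuousOn (continuous_iff_continuousAt.2 fun w =>
      (Ffun_hasDerivAt μ habs w).continuousAt)
  · intro w _
    exact (Ffun_hasDerivAt μ habs w).differentiableAt.differentiableWithinAt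
  · intro w hw
    rw [interior_Ici] at hw
    rw [(Ffun_hasDerivAt μ habs w).deriv]
    exact Ffun_deriv_nonpos μ habs (le_of_lt hw)

lemma Ffun_neg (μ : Measure ℝ) [IsProbabilityMeasure μ] (w : ℝ) : Ffun μ (-w) = Ffun μ w := by
  have key : ∀ g : ℝ → ℝ, Measurable g →
      (∫ x, gaussQ (-w * g x) ∂μ) = 1 - ∫ x, gaussQ (w * g x) ∂μ := by
    intro g hg
    have h1 : ∀ x, gaussQ (-w * g x) = 1 - gaussQ (w * g x) := by
      intro x; rw [neg_mul, gaussQ_neg]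
    calc (∫ x, gaussQ (-w * g x) ∂μ) = ∫ x, (1 - gaussQ (w * g x)) ∂μ :=
          integral_congr_ae (Eventually.of_forall h1)
    _ = (∫ _x, (1:ℝ) ∂μ) - ∫ x, gaussQ (w * g x) ∂μ :=
          integral_sub (integrable_const 1) (integrable_gaussQ_comp μ g hg w)
    _ = 1 - ∫ x, gaussQ (w * g x) ∂μ := by simp
  unfold Ffun
  rw [key (fun x => |x|) measurable_abs, key (fun x => x) measurable_id,
    binEnt_one_sub, binEnt_one_sub]

/-- Lemma 2, second inequality: if `|w₁| > |w₂|`, folding the input distribution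
(replacing `μ` by the law of `|X|`) does not increase the Wyner secrecy rate. -/
theorem folded_rate_le (w₁ w₂ : ℝ) (hw₁ : w₁ ≠ 0) (hw₂ : w₂ ≠ 0)
    (hgt : |w₂| < |w₁|) (μ : Measure ℝ) [IsProbabilityMeasure μ]
    (hint : Integrable (fun x : ℝ => x ^ 2) μ) :
    wynerRs w₁ w₂ (μ.map (fun x : ℝ => |x|)) ≤ wynerRs w₁ w₂ μ := by
  have habs : Integrable (fun x : ℝ => |x|) μ := by
    refine Integrable.mono' ((integrable_const 1).add hint)
      continuous_abs.aestronglyMeasurable (Eventually.of_forall fun x => ?_)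
    simp only [Real.norm_eq_abs, abs_abs, Pi.add_apply]
    nlinarith [sq_nonneg (|x| - 1), sq_abs x]
  have hpt : ∀ w x : ℝ, binEnt (gaussQ (w * |x|)) = binEnt (gaussQ (w * x)) := by
    intro w x
    rcases abs_choice x with h | h
    · rw [h]
    · rw [h, mul_neg, ← neg_mul, neg_mul w x, gaussQ_neg, binEnt_one_sub]
  have hmap : ∀ w : ℝ, miMeas (μ.map (fun x : ℝ => |x|)) w - miMeas μ w = Ffun μ w := by
    intro w
    unfold miMeas Ffun
    have m1 : AEStronglyMeasurable (fun x => gaussQ (w * x)) (μ.map (fun x : ℝ => |x|)) :=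
      (continuous_gaussQ.comp (continuous_const.mul continuous_id)).aestronglyMeasurable
    have m2 : AEStronglyMeasurable (fun x => binEnt (gaussQ (w * x)))
        (μ.map (fun x : ℝ => |x|)) :=
      (continuous_binEnt.comp
        (continuous_gaussQ.comp (continuous_const.mul continuous_id))).aestronglyMeasurable
    rw [integral_map measurable_abs.aemeasurable m1,
      integral_map measurable_abs.aemeasurable m2]
    have : (∫ x, binEnt (gaussQ (w * |x|)) ∂μ) = ∫ x, binEnt (gaussQ (w * x)) ∂μ :=
      integral_congr_ae (Eventually.of_forall fun x => hpt w x)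
    rw [this]; ring
  have habsF : ∀ w : ℝ, Ffun μ w = Ffun μ |w| := by
    intro w
    rcases abs_choice w with h | h
    · rw [h]
    · rw [h]; exact (Ffun_neg μ w).symm
  have hanti := Ffun_antitoneOn μ habs
  have hle : Ffun μ |w₁| ≤ Ffun μ |w₂| :=
    hanti (Set.mem_Ici.2 (abs_nonneg w₂)) (Set.mem_Ici.2 (abs_nonneg w₁)) hgt.le
  have e1 := hmap w₁
  have e2 := hmap w₂
  have f1 := habsF w₁
  have f2 := habsF w₂
  unfold wynerRs
  linarith
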